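/- Let (X,‖·‖) be a Banach space, N ∈ ℕ, f ∈ C^N([a,b],X), m ∈ ℕ (m ≥ 1), 0 < α < 1, and n ∈ ℕ with n^{1−α} > 2 and ⌈na⌉ ≤ ⌊nb⌋. Assume f^{(j)}(x₀) = 0 for j = 1,…,N for some x₀ ∈ [a,b]. Then ‖A_n(f,x₀) − f(x₀)‖ ≤ (1 + 4^m)^{1/(2m)} [ ω₁(f^{(N)}, 1/n^α) · 2/(n^{αN} N!) + ‖f^{(N)}‖_∞ (b−a)^N/(N! m(n^{1−α} − 2)^{2m}) ]. -/

import Mathlib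

open scoped BigOperators
open Real Filter

/-- The algebraic sigmoid function `φ(x) = x / (1 + x^(2m))^(1/(2m))`. -/
noncomputable def phi (m : ℕ) (x : ℝ) : ℝ :=
  x / (1 + x ^ (2 * m)) ^ ((1 : ℝ) / (2 * m))

/-- The activation function `Φ(x) = (φ(x+1) - φ(x-1))/4`. -/
noncomputable def Phi (m : ℕ) (x : ℝ) : ℝ :=
  (phi m (x + 1) - phi m (x - 1)) / 4

section PhiLemmas
variable {m : ℕ}

lemma u_pos (x : ℝ) : (0:ℝ) < 1 + x ^ (2 * m) := by
  have : (0:ℝ) ≤ x ^ (2*m) := by rw [pow_mul]; positivity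
  linarith

lemma phi_nonneg {x : ℝ} (hx : 0 ≤ x) : 0 ≤ phi m x := by
  unfold phi
  have := u_pos (m := m) x
  positivity

lemma phi_neg (x : ℝ) : phi m (-x) = - phi m x := by
  unfold phi
  rw [Even.neg_pow ⟨m, by ring⟩, neg_div]

lemma denom_mono {s t : ℝ} (hs : 0 ≤ s) (hst : s ≤ t) :
    (1 + s ^ (2*m)) ^ ((1:ℝ)/(2*m)) ≤ (1 + t ^ (2*m)) ^ ((1:ℝ)/(2*m)) := by
  apply Real.rpow_le_rpow (le_of_lt (u_pos s)) _ (by positivity)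
  have := pow_le_pow_left₀ hs hst (2*m)
  linarith

lemma phi_superadd {s t : ℝ} (hs : 0 ≤ s) (ht : 0 ≤ t) :
    phi m (s + t) ≤ phi m s + phi m t := by
  unfold phi
  have hst : (0:ℝ) ≤ s + t := by linarith
  have h1 : s / (1 + (s+t) ^ (2*m)) ^ ((1:ℝ)/(2*m)) ≤ s / (1 + s ^ (2*m)) ^ ((1:ℝ)/(2*m)) :=
    div_le_div_of_nonneg_left hs (Real.rpow_pos_of_pos (u_pos s) _) (denom_mono hs (by linarith))
  have h2 : t / (1 + (s+t) ^ (2*m)) ^ ((1:ℝ)/(2*m)) ≤ t / (1 + t ^ (2*m)) ^ ((1:ℝ)/(2*m)) :=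
    div_le_div_of_nonneg_left ht (Real.rpow_pos_of_pos (u_pos t) _) (denom_mono ht (by linarith))
  calc (s + t) / (1 + (s+t) ^ (2*m)) ^ ((1:ℝ)/(2*m))
      = s / (1 + (s+t) ^ (2*m)) ^ ((1:ℝ)/(2*m)) + t / (1 + (s+t) ^ (2*m)) ^ ((1:ℝ)/(2*m)) := by
        rw [add_div]
    _ ≤ _ := add_le_add h1 h2

lemma phi_two : phi m 2 = 2 / ((1:ℝ) + 4 ^ m) ^ ((1:ℝ)/(2*m)) := by
  unfold phi
  norm_num [pow_mul]

/-- Lower bound for Phi on `[-1,1]`. -/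
lemma Phi_ge {y : ℝ} (hy : |y| ≤ 1) :
    1 / (2 * ((1:ℝ) + 4 ^ m) ^ ((1:ℝ)/(2*m))) ≤ Phi m y := by
  rw [abs_le] at hy
  have h1 : phi m (y - 1) = - phi m (1 - y) := by
    rw [← phi_neg]; ring_nf
  have h2 : phi m 2 ≤ phi m (y + 1) + phi m (1 - y) := by
    have := phi_superadd (m := m) (by linarith : (0:ℝ) ≤ y + 1) (by linarith : (0:ℝ) ≤ 1 - y)
    convert this using 2
    ring
  rw [phi_two] at h2
  have hpos : (0:ℝ) < ((1:ℝ) + 4 ^ m) ^ ((1:ℝ)/(2*m)) := Real.rpow_pos_of_pos (by positivity) _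
  rw [Phi, h1, sub_neg_eq_add]
  calc 1 / (2 * ((1:ℝ) + 4 ^ m) ^ ((1:ℝ)/(2*m)))
      = (2 / ((1:ℝ) + 4 ^ m) ^ ((1:ℝ)/(2*m))) / 4 := by
        field_simp; ring
    _ ≤ (phi m (y + 1) + phi m (1 - y)) / 4 := by linarith

end PhiLemmas

section D
variable {m : ℕ}

lemma u_pos' (x : ℝ) : (0:ℝ) < 1 + x ^ (2 * m) := by
  have : (0:ℝ) ≤ x ^ (2*m) := by rw [pow_mul]; positivity
  linarith

noncomputable def phi' (m : ℕ) (x : ℝ) : ℝ :=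
  (1 + x ^ (2 * m)) ^ (-(1 + (1:ℝ)/(2*m)))

lemma phi'_pos (x : ℝ) : 0 < phi' m x := Real.rpow_pos_of_pos (u_pos' x) _

lemma hasDerivAt_phi (hm : 1 ≤ m) (x : ℝ) : HasDerivAt (phi m) (phi' m x) x := by
  have hu : (0:ℝ) < 1 + x ^ (2*m) := u_pos' x
  have hder_u : HasDerivAt (fun x : ℝ => 1 + x ^ (2*m)) ((2*m : ℝ) * x ^ (2*m - 1)) x := by
    simpa using (hasDerivAt_pow (2*m) x).const_add 1
  have hD : HasDerivAt (fun x : ℝ => (1 + x ^ (2*m)) ^ ((1:ℝ)/(2*m)))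
      ((2*m : ℝ) * x ^ (2*m - 1) * ((1:ℝ)/(2*m)) * (1 + x ^ (2*m)) ^ ((1:ℝ)/(2*m) - 1)) x :=
    hder_u.rpow_const (Or.inl hu.ne')
  have hDpos : (0:ℝ) < (1 + x ^ (2*m)) ^ ((1:ℝ)/(2*m)) := Real.rpow_pos_of_pos hu _
  have h := (hasDerivAt_id x).div hD hDpos.ne'
  refine h.congr_deriv (Eq.symm ?_)
  have hm2 : ((2:ℝ)*m) ≠ 0 := by positivity
  rw [phi']
  simp only [id_eq, one_mul]
  have e1 : (2*m : ℝ) * x ^ (2*m - 1) * ((1:ℝ)/(2*m)) * (1 + x ^ (2*m)) ^ ((1:ℝ)/(2*m) - 1)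
      = x ^ (2*m-1) * (1 + x ^ (2*m)) ^ ((1:ℝ)/(2*m) - 1) := by
    field_simp
  rw [e1]
  have e2 : x * (x ^ (2*m-1) * (1 + x ^ (2*m)) ^ ((1:ℝ)/(2*m) - 1))
      = x ^ (2*m) * (1 + x ^ (2*m)) ^ ((1:ℝ)/(2*m) - 1) := by
    rw [← mul_assoc, ← pow_succ']
    congr 2
    omega
  rw [e2]
  have e3 : (1 + x ^ (2*m)) ^ ((1:ℝ)/(2*m)) = (1 + x^(2*m)) * (1 + x ^ (2*m)) ^ ((1:ℝ)/(2*m) - 1) := by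
    nth_rewrite 2 [show (1 + x^(2*m)) = (1 + x^(2*m)) ^ (1:ℝ) from (Real.rpow_one _).symm]
    rw [← Real.rpow_add hu]
    norm_num
  have e5 : (1 + x ^ (2*m)) ^ ((1:ℝ)/(2*m)) - x ^ (2*m) * (1 + x ^ (2*m)) ^ ((1:ℝ)/(2*m) - 1)
      = (1 + x ^ (2*m)) ^ ((1:ℝ)/(2*m) - 1) := by
    rw [e3]; ring
  rw [e5, ← Real.rpow_natCast ((1 + x ^ (2*m)) ^ ((1:ℝ)/(2*m))) 2, ← Real.rpow_mul hu.le,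
    ← Real.rpow_sub hu]
  congr 1
  push_cast
  ring
end D

section E
variable {m : ℕ}

lemma phi_strictMono (hm : 1 ≤ m) : StrictMono (phi m) :=
  strictMono_of_deriv_pos fun x => by
    rw [(hasDerivAt_phi hm x).deriv]; exact phi'_pos x

lemma Phi_nonneg (hm : 1 ≤ m) (x : ℝ) : 0 ≤ Phi m x := by
  have := (phi_strictMono hm).le_iff_le.2 (show x - 1 ≤ x + 1 by linarith)
  unfold Phi
  linarith

lemma Phi_even (x : ℝ) : Phi m (-x) = Phi m x := by
  unfold Phi
  have h1 : phi m (-x + 1) = - phi m (x - 1) := by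
    rw [show (-x + 1 : ℝ) = -(x - 1) by ring, phi_neg]
  have h2 : phi m (-x - 1) = - phi m (x + 1) := by
    rw [show (-x - 1 : ℝ) = -(x + 1) by ring, phi_neg]
  rw [h1, h2]
  ring

lemma phi'_le (hm : 1 ≤ m) {d ξ : ℝ} (hd : 0 < d) (hξ : d ≤ ξ) :
    phi' m ξ ≤ ((d ^ (2*m+1))⁻¹ : ℝ) := by
  have hξ0 : 0 < ξ := lt_of_lt_of_le hd hξ
  have h1 : phi' m ξ ≤ (ξ ^ (2*m) : ℝ) ^ (-(1 + (1:ℝ)/(2*m))) := by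
    apply Real.rpow_le_rpow_of_nonpos (by positivity) (by linarith) 
    have : (0:ℝ) < 1 + (1:ℝ)/(2*m) := by positivity
    linarith
  have h2 : (ξ ^ (2*m) : ℝ) ^ (-(1 + (1:ℝ)/(2*m))) = (ξ ^ (2*m+1))⁻¹ := by
    rw [← Real.rpow_natCast ξ (2*m), ← Real.rpow_mul hξ0.le]
    have hmm : ((2*m : ℕ) : ℝ) * (-(1 + (1:ℝ)/(2*m))) = -((2*m+1 : ℕ) : ℝ) := by
      have : (m:ℝ) ≠ 0 := by positivity
      push_cast
      field_simp
    rw [hmm, Real.rpow_neg hξ0.le, Real.rpow_natCast]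
  rw [h2] at h1
  refine h1.trans ?_
  apply inv_anti₀ (by positivity)
  exact pow_le_pow_left₀ hd.le hξ _

lemma Phi_le_tail (hm : 1 ≤ m) {x : ℝ} (hx : 1 < x) :
    Phi m x ≤ ((x - 1) ^ (2*m+1))⁻¹ / 2 := by
  have hd : (0:ℝ) < x - 1 := by linarith
  set C := ((x - 1) ^ (2*m+1))⁻¹ with hC
  have hmvt : ‖phi m (x+1) - phi m (x-1)‖ ≤ C * ‖(x+1) - (x-1)‖ := by
    apply Convex.norm_image_sub_le_of_norm_hasDerivWithin_le
      (f' := phi' m) (s := Set.Icc (x-1) (x+1))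
      (fun ξ _ => (hasDerivAt_phi hm ξ).hasDerivWithinAt)
      (fun ξ hξ => ?_) (convex_Icc _ _)
      (show x-1 ∈ Set.Icc (x-1) (x+1) from Set.mem_Icc.2 ⟨le_refl _, by linarith⟩)
      (show x+1 ∈ Set.Icc (x-1) (x+1) from Set.mem_Icc.2 ⟨by linarith, le_refl _⟩)
    rw [Real.norm_eq_abs, abs_of_pos (phi'_pos ξ)]
    exact phi'_le hm hd hξ.1
  have hmono : phi m (x-1) ≤ phi m (x+1) := (phi_strictMono hm).le_iff_le.2 (by linarith)
  rw [Real.norm_eq_abs, Real.norm_eq_abs, abs_of_nonneg (by linarith),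
    show (x+1) - (x-1) = (2:ℝ) by ring, abs_of_pos two_pos] at hmvt
  unfold Phi
  linarith
end E

section F
variable {m : ℕ}

lemma step_ineq {p : ℕ} {a : ℝ} (ha : 0 < a) :
    (p+1 : ℝ) * ((a+1)^(p+2))⁻¹ ≤ (a^(p+1))⁻¹ - ((a+1)^(p+1))⁻¹ := by
  have ha1 : (0:ℝ) < a + 1 := by linarith
  have hb : 1 + ((p+1 : ℕ) : ℝ) * (1/a) ≤ (1 + 1/a)^(p+1) :=
    one_add_mul_le_pow (le_trans (by norm_num : (-2:ℝ) ≤ 0) (le_of_lt (by positivity : (0:ℝ) < 1/a))) (p+1)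
  have hb' : a^(p+1) + (p+1:ℝ) * a^p ≤ (a+1)^(p+1) := by
    have h := mul_le_mul_of_nonneg_right hb (le_of_lt (pow_pos ha (p+1)))
    calc a^(p+1) + (p+1:ℝ)*a^p
        = (1 + ((p+1:ℕ):ℝ)*(1/a)) * a^(p+1) := by
          push_cast
          field_simp
          ring
      _ ≤ (1+1/a)^(p+1) * a^(p+1) := h
      _ = (a+1)^(p+1) := by
          rw [← mul_pow]
          congr 1
          field_simp
  have e : (a^(p+1))⁻¹ - ((a+1)^(p+1))⁻¹
      = ((a+1)^(p+1) - a^(p+1)) / (a^(p+1)*(a+1)^(p+1)) := by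
    field_simp
  rw [e]
  have hPQ : (0:ℝ) < a^(p+1)*(a+1)^(p+1) := by positivity
  have h2 : (p+1:ℝ)*a^p / (a^(p+1)*(a+1)^(p+1))
      ≤ ((a+1)^(p+1) - a^(p+1)) / (a^(p+1)*(a+1)^(p+1)) :=
    (div_le_div_iff_of_pos_right hPQ).2 (by linarith)
  refine le_trans ?_ h2
  rw [← div_eq_mul_inv, div_le_div_iff₀ (by positivity) hPQ]
  have e1 : a^(p+1) = a^p * a := pow_succ a p
  have e2 : (a+1)^(p+2) = (a+1)^(p+1) * (a+1) := pow_succ (a+1) (p+1)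
  rw [e1, e2]
  have hap : (0:ℝ) < a ^ p := pow_pos ha p
  have haq : (0:ℝ) < (a+1) ^ (p+1) := pow_pos ha1 (p+1)
  nlinarith [mul_pos hap haq, mul_pos (mul_pos hap haq) ha]

lemma Phi_le_g (hm : 1 ≤ m) {lam : ℝ} (hlam : 2 < lam) {t : ℝ} {j : ℕ}
    (ht : lam + j < t) :
    Phi m t ≤ (1/(4*m)) * (((lam-2+j)^(2*m))⁻¹ - ((lam-2+j+1)^(2*m))⁻¹) := by
  have hj : (0:ℝ) ≤ (j:ℝ) := Nat.cast_nonneg j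
  have ht1 : (1:ℝ) < t := by linarith
  have ha : (0:ℝ) < lam - 2 + j := by linarith
  have h1 : Phi m t ≤ ((t - 1) ^ (2*m+1))⁻¹ / 2 := Phi_le_tail hm ht1
  have h2 : ((t - 1) ^ (2*m+1))⁻¹ ≤ ((lam - 1 + j) ^ (2*m+1))⁻¹ := by
    apply inv_anti₀ (pow_pos (by linarith) _)
    apply pow_le_pow_left₀ (by linarith)
    linarith
  have h3 := step_ineq (p := 2*m - 1) ha
  have hp1 : 2*m - 1 + 1 = 2*m := by omega
  have hp2 : 2*m - 1 + 2 = 2*m + 1 := by omega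
  rw [hp1, hp2] at h3
  have hc : ((2*m - 1 : ℕ) : ℝ) + 1 = (2*m : ℝ) := by
    have : (1:ℕ) ≤ 2*m := by omega
    push_cast [Nat.cast_sub this]
    ring
  rw [hc] at h3
  -- h3 : 2*m * ((lam-2+j+1)^(2m+1))⁻¹ ≤ ((lam-2+j)^(2m))⁻¹ - ((lam-2+j+1)^(2m))⁻¹
  have he : lam - 2 + (j:ℝ) + 1 = lam - 1 + j := by ring
  rw [he] at h3
  have hm0 : (0:ℝ) < (m:ℝ) := by exact_mod_cast Nat.pos_of_ne_zero (by omega)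
  calc Phi m t ≤ ((t - 1) ^ (2*m+1))⁻¹ / 2 := h1
    _ ≤ ((lam - 1 + j) ^ (2*m+1))⁻¹ / 2 := by linarith
    _ ≤ (1/(4*m)) * (((lam-2+j)^(2*m))⁻¹ - ((lam-1+j)^(2*m))⁻¹) := by
        rw [div_le_iff₀ (by norm_num : (0:ℝ) < 2)] at *
        calc ((lam - 1 + j) ^ (2*m+1))⁻¹
            = (1/(2*(m:ℝ))) * ((2*(m:ℝ)) * ((lam - 1 + j) ^ (2*m+1))⁻¹) := by
              field_simp
          _ ≤ (1/(2*(m:ℝ))) * (((lam-2+j)^(2*m))⁻¹ - ((lam-1+j)^(2*m))⁻¹) := by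
              exact mul_le_mul_of_nonneg_left h3 (by positivity)
          _ = (1/(4*m)) * (((lam-2+j)^(2*m))⁻¹ - ((lam-1+j)^(2*m))⁻¹) * 2 := by
              field_simp
              ring
    _ = (1/(4*m)) * (((lam-2+j)^(2*m))⁻¹ - ((lam-2+j+1)^(2*m))⁻¹) := by
        rw [he]
end F

section G
variable {m : ℕ}

lemma tele_sum {g : ℕ → ℝ} (hg : ∀ j, g (j+1) ≤ g j) (hg0 : ∀ j, 0 ≤ g j) (T : Finset ℕ) :
    ∑ j ∈ T, (g j - g (j+1)) ≤ g 0 := by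
  obtain ⟨M, hM⟩ := T.exists_nat_subset_range
  calc ∑ j ∈ T, (g j - g (j+1))
      ≤ ∑ j ∈ Finset.range M, (g j - g (j+1)) :=
        Finset.sum_le_sum_of_subset_of_nonneg hM (fun j _ _ => by linarith [hg j])
    _ = g 0 - g M := Finset.sum_range_sub' g M
    _ ≤ g 0 := by linarith [hg0 M]

lemma side_bound (hm : 1 ≤ m) {lam : ℝ} (hlam : 2 < lam) (S : Finset ℤ) (ι : ℤ → ℕ)
    (hinj : ∀ k ∈ S, ∀ k' ∈ S, ι k = ι k' → k = k')
    (d : ℤ → ℝ) (hd : ∀ k ∈ S, lam + (ι k : ℝ) < d k) :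
    ∑ k ∈ S, Phi m (d k) ≤ ((lam - 2)^(2*m))⁻¹ / (4*m) := by
  set g : ℕ → ℝ := fun j => ((lam - 2 + j)^(2*m))⁻¹ with hgdef
  have hgpos : ∀ j : ℕ, (0:ℝ) < lam - 2 + j := fun j => by
    have : (0:ℝ) ≤ (j:ℝ) := Nat.cast_nonneg j
    linarith
  have hgmono : ∀ j, g (j+1) ≤ g j := fun j => by
    simp only [hgdef]
    apply inv_anti₀ (pow_pos (hgpos j) _)
    apply pow_le_pow_left₀ (hgpos j).le
    push_cast
    linarith
  have hg0 : ∀ j, 0 ≤ g j := fun j => by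
    simp only [hgdef]
    exact inv_nonneg.2 (pow_pos (hgpos j) _).le
  have hstep : ∀ k ∈ S, Phi m (d k) ≤ (1/(4*(m:ℝ))) * (g (ι k) - g (ι k + 1)) := by
    intro k hk
    have h := Phi_le_g hm hlam (hd k hk)
    convert h using 3
    simp only [hgdef]
    push_cast
    ring
  calc ∑ k ∈ S, Phi m (d k)
      ≤ ∑ k ∈ S, (1/(4*(m:ℝ))) * (g (ι k) - g (ι k + 1)) := Finset.sum_le_sum hstep
    _ = (1/(4*(m:ℝ))) * ∑ k ∈ S, (g (ι k) - g (ι k + 1)) := by rw [Finset.mul_sum]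
    _ = (1/(4*(m:ℝ))) * ∑ j ∈ S.image ι, (g j - g (j+1)) := by
        rw [Finset.sum_image hinj]
    _ ≤ (1/(4*(m:ℝ))) * g 0 := by
        apply mul_le_mul_of_nonneg_left (tele_sum hgmono hg0 _) (by positivity)
    _ = ((lam - 2)^(2*m))⁻¹ / (4*m) := by
        simp only [hgdef]
        norm_num
        ring

lemma tail_sum (hm : 1 ≤ m) {lam x : ℝ} (hlam : 2 < lam) (F : Finset ℤ) :
    ∑ k ∈ F.filter (fun k : ℤ => lam < |x - (k:ℝ)|), Phi m (x - k)
      ≤ ((lam - 2)^(2*m))⁻¹ / (2*m) := by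
  set T := F.filter (fun k : ℤ => lam < |x - (k:ℝ)|) with hT
  have hsplit := Finset.sum_filter_add_sum_filter_not T (fun k : ℤ => (k:ℝ) < x)
    (fun k => Phi m (x - (k:ℝ)))
  set T₁ := T.filter (fun k : ℤ => (k:ℝ) < x) with hT1
  set T₂ := T.filter (fun k : ℤ => ¬ (k:ℝ) < x) with hT2
  have hb1 : ∑ k ∈ T₁, Phi m (x - (k:ℝ)) ≤ ((lam - 2)^(2*m))⁻¹ / (4*m) := by
    set K₀ : ℤ := ⌈x - lam⌉ - 1 with hK0
    have hmem : ∀ k ∈ T₁, (k:ℝ) < x - lam ∧ k ≤ K₀ := by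
      intro k hk
      rw [hT1, Finset.mem_filter] at hk
      obtain ⟨hk1, hk2⟩ := hk
      rw [hT, Finset.mem_filter] at hk1
      have habs : lam < |x - (k:ℝ)| := hk1.2
      have h1 : lam < x - k := by
        rwa [abs_of_pos (by linarith : (0:ℝ) < x - k)] at habs
      constructor
      · linarith
      · rw [hK0]
        have : k < ⌈x - lam⌉ := Int.lt_ceil.2 (by linarith)
        omega
    apply side_bound hm hlam T₁ (fun k => (K₀ - k).toNat) _ (fun k => x - (k:ℝ)) _
    · intro k hk k' hk' he
      have h1 := (hmem k hk).2
      have h2 := (hmem k' hk').2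
      have he' : (K₀ - k).toNat = (K₀ - k').toNat := he
      omega
    · intro k hk
      have h1 := (hmem k hk).1
      have h2 := (hmem k hk).2
      have e1 : (((K₀ - k).toNat : ℕ) : ℝ) = (K₀ : ℝ) - (k : ℝ) := by
        rw [← Int.cast_natCast, Int.toNat_of_nonneg (by omega)]
        push_cast
        ring
      rw [e1]
      have hK0lt : (K₀ : ℝ) < x - lam := by
        rw [hK0]
        push_cast
        have := Int.ceil_lt_add_one (x - lam)
        linarith
      linarith
  have hb2 : ∑ k ∈ T₂, Phi m (x - (k:ℝ)) ≤ ((lam - 2)^(2*m))⁻¹ / (4*m) := by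
    set K₁ : ℤ := ⌊x + lam⌋ + 1 with hK1
    have hmem : ∀ k ∈ T₂, x + lam < (k:ℝ) ∧ K₁ ≤ k := by
      intro k hk
      rw [hT2, Finset.mem_filter] at hk
      obtain ⟨hk1, hk2⟩ := hk
      rw [hT, Finset.mem_filter] at hk1
      have habs : lam < |x - (k:ℝ)| := hk1.2
      push_neg at hk2
      have h1 : lam < (k:ℝ) - x := by
        rw [abs_sub_comm, abs_of_nonneg (by linarith : (0:ℝ) ≤ (k:ℝ) - x)] at habs
        exact habs
      constructor
      · linarith
      · rw [hK1]
        have : ⌊x + lam⌋ < k := Int.floor_lt.2 (by push_cast; linarith)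
        omega
    have heq : ∑ k ∈ T₂, Phi m (x - (k:ℝ)) = ∑ k ∈ T₂, Phi m ((k:ℝ) - x) := by
      apply Finset.sum_congr rfl
      intro k _
      rw [show x - (k:ℝ) = -((k:ℝ) - x) by ring, Phi_even]
    rw [heq]
    apply side_bound hm hlam T₂ (fun k => (k - K₁).toNat) _ (fun k => (k:ℝ) - x) _
    · intro k hk k' hk' he
      have h1 := (hmem k hk).2
      have h2 := (hmem k' hk').2
      have he' : (k - K₁).toNat = (k' - K₁).toNat := he
      omega
    · intro k hk
      have h1 := (hmem k hk).1
      have h2 := (hmem k hk).2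
      have e1 : (((k - K₁).toNat : ℕ) : ℝ) = (k : ℝ) - (K₁ : ℝ) := by
        rw [← Int.cast_natCast, Int.toNat_of_nonneg (by omega)]
        push_cast
        ring
      rw [e1]
      have hK1gt : x + lam < (K₁ : ℝ) := by
        rw [hK1]
        push_cast
        have := Int.lt_floor_add_one (x + lam)
        linarith
      linarith
  have : ∑ k ∈ T, Phi m (x - (k:ℝ)) = ∑ k ∈ T₁, Phi m (x - (k:ℝ)) + ∑ k ∈ T₂, Phi m (x - (k:ℝ)) :=
    hsplit.symm
  rw [this]
  have hfin : ((lam - 2)^(2*m))⁻¹ / (4*m) + ((lam - 2)^(2*m))⁻¹ / (4*m)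
      = ((lam - 2)^(2*m))⁻¹ / (2*m) := by
    ring
  linarith
end G
section Taylor
variable {X : Type*} [NormedAddCommGroup X] [NormedSpace ℝ X]

lemma taylor_vanishing {a b : ℝ} (hab : a < b) {N : ℕ} (hN : 1 ≤ N) {f : ℝ → X}
    (hf : ContDiffOn ℝ N f (Set.Icc a b)) {x₀ : ℝ} (hx₀ : x₀ ∈ Set.Icc a b)
    (hder : ∀ j : ℕ, 1 ≤ j → j ≤ N → iteratedDerivWithin j f (Set.Icc a b) x₀ = 0)
    {c x : ℝ} (hx : x ∈ Set.Icc a b)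
    (hc : ∀ ξ ∈ Set.Icc a b, |ξ - x₀| ≤ |x - x₀| →
      ‖iteratedDerivWithin N f (Set.Icc a b) ξ‖ ≤ c) :
    ‖f x - f x₀‖ ≤ c * |x - x₀| ^ N / N.factorial := by
  set s := Set.Icc a b with hsdef
  have hs : UniqueDiffOn ℝ s := uniqueDiffOn_Icc hab
  set g : ℕ → ℝ → X := fun j => iteratedDerivWithin j f s with hgdef
  have hgc : ∀ j : ℕ, j ≤ N → ContinuousOn (g j) s := fun j hj =>
    hf.continuousOn_iteratedDerivWithin (by exact_mod_cast hj) hs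
  have hgd : ∀ j : ℕ, j < N → ∀ t ∈ s, HasDerivWithinAt (g j) (g (j+1) t) s t := by
    intro j hj t ht
    have hdiff : DifferentiableOn ℝ (g j) s :=
      hf.differentiableOn_iteratedDerivWithin (by exact_mod_cast hj) hs
    have h1 := (hdiff t ht).hasDerivWithinAt
    have h2 : g (j+1) t = derivWithin (g j) s t := congrFun iteratedDerivWithin_succ t
    rwa [← h2] at h1
  have key : ∀ i : ℕ, i ≤ N → ∀ t ∈ s, |t - x₀| ≤ |x - x₀| →
      ‖g (N - i) t - g (N - i) x₀‖ ≤ c * |t - x₀| ^ i / i.factorial := by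
    intro i
    induction i with
    | zero =>
      intro _ t ht hdist
      rw [Nat.sub_zero, pow_zero, Nat.factorial_zero]
      have hgN : g N x₀ = 0 := hder N hN le_rfl
      rw [hgN, sub_zero]
      have := hc t ht hdist
      simpa using this
    | succ i ih =>
      intro hiN t ht hdist
      have hiN' : i ≤ N := by omega
      set j := N - (i+1) with hjdef
      have hjsucc : j + 1 = N - i := by omega
      have hjlt : j < N := by omega
      have hgj1x₀ : g (j+1) x₀ = 0 := hder (j+1) (by omega) (by omega)
      rcases le_or_gt x₀ t with hcase | hcase
      · -- t to the right of x₀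
        have hsub : Set.Icc x₀ t ⊆ s := Set.Icc_subset_Icc hx₀.1 ht.2
        have hmain : ∀ ⦃y⦄, y ∈ Set.Icc x₀ t →
            ‖g j y - g j x₀‖ ≤ c * (y - x₀)^(i+1) / (i+1).factorial := by
          apply image_norm_le_of_norm_deriv_right_le_deriv_boundary
            (f' := fun τ => g (j+1) τ)
            (B := fun τ => c * (τ - x₀)^(i+1) / (i+1).factorial)
            (B' := fun τ => c * (τ - x₀)^i / i.factorial)
          · exact ((hgc j (by omega)).mono hsub).sub continuousOn_const
          · intro τ hτ
            have hτs : τ ∈ s := hsub ⟨hτ.1, hτ.2.le⟩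
            have hmem : s ∈ nhdsWithin τ (Set.Ici τ) := by
              apply mem_nhdsWithin.2
              refine ⟨Set.Iio b, isOpen_Iio, lt_of_lt_of_le hτ.2 ht.2, ?_⟩
              rintro z ⟨hz1, hz2⟩
              exact ⟨le_trans hτs.1 hz2, le_of_lt hz1⟩
            exact ((hgd j hjlt τ hτs).mono_of_mem_nhdsWithin hmem).sub_const _
          · simp [zero_pow (by omega : i + 1 ≠ 0)]
          · intro τ
            have h := ((((hasDerivAt_id τ).sub_const x₀).pow (i+1)).const_mul c).div_const
              ((i+1).factorial : ℝ)
            refine h.congr_deriv (Eq.symm ?_)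
            simp only [id_eq]
            rw [Nat.factorial_succ]
            push_cast
            field_simp
          · intro τ hτ
            have hτs : τ ∈ s := hsub ⟨hτ.1, hτ.2.le⟩
            have hdist' : |τ - x₀| ≤ |x - x₀| := by
              rw [abs_of_nonneg (by linarith [hτ.1] : (0:ℝ) ≤ τ - x₀)]
              have h1 : τ - x₀ ≤ t - x₀ := by linarith [hτ.2.le]
              have h2 : t - x₀ ≤ |t - x₀| := le_abs_self _
              linarith
            have hih := ih hiN' τ hτs hdist'
            rw [← hjsucc] at hih
            rw [hgj1x₀, sub_zero] at hih
            rwa [abs_of_nonneg (by linarith [hτ.1] : (0:ℝ) ≤ τ - x₀)] at hih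
        have := hmain (Set.right_mem_Icc.2 hcase)
        rwa [abs_of_nonneg (by linarith : (0:ℝ) ≤ t - x₀)]
      · -- t to the left of x₀
        have hsub : Set.Icc t x₀ ⊆ s := Set.Icc_subset_Icc ht.1 hx₀.2
        have hmain : ∀ ⦃y⦄, y ∈ Set.Icc (0:ℝ) (x₀ - t) →
            ‖g j (x₀ - y) - g j x₀‖ ≤ c * y^(i+1) / (i+1).factorial := by
          apply image_norm_le_of_norm_deriv_right_le_deriv_boundary
            (f' := fun τ => (-1:ℝ) • g (j+1) (x₀ - τ))
            (B := fun τ => c * τ^(i+1) / (i+1).factorial)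
            (B' := fun τ => c * τ^i / i.factorial)
          · apply ContinuousOn.sub _ continuousOn_const
            apply (hgc j (by omega)).comp
              ((continuous_const.sub continuous_id).continuousOn)
            intro τ hτ
            exact hsub ⟨by simp; linarith [hτ.2], by simp; linarith [hτ.1]⟩
          · intro τ hτ
            have hξs : x₀ - τ ∈ s := hsub ⟨by linarith [hτ.2], by linarith [hτ.1]⟩
            have inner : HasDerivWithinAt (fun τ : ℝ => x₀ - τ) (-1)
                (Set.Icc 0 (x₀ - t)) τ := ((hasDerivAt_id τ).const_sub x₀).hasDerivWithinAt
            have outer : HasDerivWithinAt (g j) (g (j+1) (x₀ - τ)) s (x₀ - τ) :=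
              hgd j hjlt _ hξs
            have maps : Set.MapsTo (fun τ : ℝ => x₀ - τ) (Set.Icc 0 (x₀ - t)) s := by
              intro z hz
              exact hsub ⟨by simp; linarith [hz.2], by simp; linarith [hz.1]⟩
            have comp := HasDerivWithinAt.scomp τ outer inner maps
            have hmem : Set.Icc (0:ℝ) (x₀ - t) ∈ nhdsWithin τ (Set.Ici τ) := by
              apply mem_nhdsWithin.2
              refine ⟨Set.Iio (x₀ - t), isOpen_Iio, hτ.2, ?_⟩
              rintro z ⟨hz1, hz2⟩
              exact ⟨le_trans hτ.1 hz2, le_of_lt hz1⟩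
            exact ((comp.mono_of_mem_nhdsWithin hmem).sub_const _)
          · simp [zero_pow (by omega : i + 1 ≠ 0)]
          · intro τ
            have h := ((((hasDerivAt_id τ).pow (i+1))).const_mul c).div_const
              ((i+1).factorial : ℝ)
            refine h.congr_deriv (Eq.symm ?_)
            simp only [id_eq]
            rw [Nat.factorial_succ]
            push_cast
            field_simp
          · intro τ hτ
            have hξs : x₀ - τ ∈ s := hsub ⟨by linarith [hτ.2], by linarith [hτ.1]⟩
            have hdist' : |(x₀ - τ) - x₀| ≤ |x - x₀| := by
              rw [show x₀ - τ - x₀ = -τ by ring, abs_neg, abs_of_nonneg hτ.1]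
              have h2 : x₀ - t ≤ |t - x₀| := by
                rw [abs_sub_comm]; exact le_abs_self _
              linarith [hτ.2.le]
            have hih := ih hiN' _ hξs hdist'
            rw [← hjsucc] at hih
            rw [hgj1x₀, sub_zero] at hih
            rw [norm_smul]
            simp only [norm_neg, norm_one, one_mul]
            rw [show |(x₀ - τ) - x₀| = |τ| by rw [show x₀ - τ - x₀ = -τ by ring, abs_neg],
              abs_of_nonneg hτ.1] at hih
            simpa using hih
        have := hmain (Set.right_mem_Icc.2 (by linarith : (0:ℝ) ≤ x₀ - t))
        rw [show x₀ - (x₀ - t) = t by ring] at this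
        rwa [abs_of_nonpos (by linarith : t - x₀ ≤ 0), show -(t-x₀) = x₀ - t by ring]
  have hfin := key N le_rfl x hx le_rfl
  rw [Nat.sub_self] at hfin
  simpa [hgdef, iteratedDerivWithin_zero] using hfin
end Taylor

/-- First modulus of continuity of `f` on the set `s`, with step `δ`. -/
noncomputable def omega1 {X : Type*} [NormedAddCommGroup X] (f : ℝ → X) (s : Set ℝ)
    (δ : ℝ) : ℝ :=
  sSup {r : ℝ | ∃ x ∈ s, ∃ y ∈ s, |x - y| ≤ δ ∧ r = ‖f x - f y‖}

/-- Sup norm of `f` over a set `s`. -/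
noncomputable def supNorm {X : Type*} [NormedAddCommGroup X] (f : ℝ → X) (s : Set ℝ) : ℝ :=
  ⨆ t : s, ‖f t‖

/-- The neural network operator `A_n` induced by the density `Φ`. -/
noncomputable def An {X : Type*} [NormedAddCommGroup X] [Module ℝ X]
    (m : ℕ) (a b : ℝ) (n : ℕ) (f : ℝ → X) (x : ℝ) : X :=
  (∑ k ∈ Finset.Icc ⌈(n : ℝ) * a⌉ ⌊(n : ℝ) * b⌋, Phi m ((n : ℝ) * x - (k : ℝ)))⁻¹ •
    ∑ k ∈ Finset.Icc ⌈(n : ℝ) * a⌉ ⌊(n : ℝ) * b⌋,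
      Phi m ((n : ℝ) * x - (k : ℝ)) • f ((k : ℝ) / n)

theorem An_approx_smooth_vanishing_derivs {X : Type*} [NormedAddCommGroup X]
    [NormedSpace ℝ X] [CompleteSpace X] (a b : ℝ) (hab : a ≤ b) (N : ℕ) (hN : 1 ≤ N)
    (f : ℝ → X) (hf : ContDiffOn ℝ N f (Set.Icc a b)) (m : ℕ) (hm : 1 ≤ m)
    (α : ℝ) (hα0 : 0 < α) (hα1 : α < 1) (n : ℕ) (hn : 2 < (n : ℝ) ^ (1 - α))
    (hnab : ⌈(n : ℝ) * a⌉ ≤ ⌊(n : ℝ) * b⌋) (x₀ : ℝ) (hx₀ : x₀ ∈ Set.Icc a b)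
    (hder : ∀ j : ℕ, 1 ≤ j → j ≤ N → iteratedDerivWithin j f (Set.Icc a b) x₀ = 0) :
    ‖An m a b n f x₀ - f x₀‖ ≤
      ((1 : ℝ) + 4 ^ m) ^ ((1 : ℝ) / (2 * m)) *
        (omega1 (iteratedDerivWithin N f (Set.Icc a b)) (Set.Icc a b)
            (1 / (n : ℝ) ^ α) * 2 / ((n : ℝ) ^ (α * N) * (N.factorial : ℝ)) +
          supNorm (iteratedDerivWithin N f (Set.Icc a b)) (Set.Icc a b) * (b - a) ^ N /
            ((N.factorial : ℝ) * m * ((n : ℝ) ^ (1 - α) - 2) ^ (2 * m))) := by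
  classical
  have hn0 : (0:ℝ) < n := by
    rcases Nat.eq_zero_or_pos n with h | h
    · subst h
      rw [Nat.cast_zero, Real.zero_rpow (by linarith : 1 - α ≠ 0)] at hn
      linarith
    · exact_mod_cast h
  set s := Set.Icc a b with hsdef
  set F := Finset.Icc ⌈(n : ℝ) * a⌉ ⌊(n : ℝ) * b⌋ with hFdef
  set Φk : ℤ → ℝ := fun k => Phi m ((n : ℝ) * x₀ - k) with hΦkdef
  set V := ∑ k ∈ F, Φk k with hVdef
  set g := iteratedDerivWithin N f s with hgdef
  set ω := omega1 g s (1 / (n:ℝ)^α) with hωdef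
  set Mf := supNorm g s with hMfdef
  set C := ((1:ℝ) + 4^m) ^ ((1:ℝ)/(2*m)) with hCdef
  have h4m : (0:ℝ) < 4^m := by positivity
  have hCpos : 0 < C := Real.rpow_pos_of_pos (by linarith) _
  have hC1 : 1 ≤ C := by
    have := Real.rpow_le_rpow (by norm_num : (0:ℝ) ≤ 1) (by linarith : (1:ℝ) ≤ 1 + 4^m)
      (by positivity : (0:ℝ) ≤ (1:ℝ)/(2*m))
    rwa [Real.one_rpow] at this
  have hω0 : 0 ≤ ω := by
    apply Real.sSup_nonneg
    rintro r ⟨u, _, v, _, _, rfl⟩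
    exact norm_nonneg _
  have hMf0 : 0 ≤ Mf := Real.iSup_nonneg fun t => norm_nonneg _
  have hnapos : (0:ℝ) < (n:ℝ)^α := Real.rpow_pos_of_pos hn0 _
  have hNfacpos : (0:ℝ) < (N.factorial : ℝ) := by exact_mod_cast N.factorial_pos
  have hnaNpos : (0:ℝ) < (n:ℝ)^(α * (N:ℝ)) := Real.rpow_pos_of_pos hn0 _
  have hΦnonneg : ∀ k, 0 ≤ Φk k := fun k => Phi_nonneg hm _
  have hlam2 : (0:ℝ) < (n:ℝ)^(1-α) - 2 := by linarith
  have hmR : (0:ℝ) < (m:ℝ) := by exact_mod_cast hm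
  -- nonemptiness and V > 0
  have hFne : F.Nonempty := ⟨⌈(n : ℝ) * a⌉, Finset.mem_Icc.2 ⟨le_refl _, hnab⟩⟩
  have hk₀ : ∃ k₀ ∈ F, |(n:ℝ)*x₀ - k₀| ≤ 1 := by
    rcases le_or_gt ⌈(n : ℝ) * a⌉ ⌊(n : ℝ) * x₀⌋ with hcase | hcase
    · refine ⟨⌊(n : ℝ) * x₀⌋, Finset.mem_Icc.2 ⟨hcase, ?_⟩, ?_⟩
      · exact Int.floor_le_floor (by nlinarith [hx₀.2])
      · have h1 := Int.floor_le ((n:ℝ) * x₀)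
        have h2 := Int.lt_floor_add_one ((n:ℝ) * x₀)
        rw [abs_le]
        constructor <;> linarith
    · refine ⟨⌈(n : ℝ) * a⌉, Finset.mem_Icc.2 ⟨le_refl _, hnab⟩, ?_⟩
      have h1 : (n:ℝ) * a ≤ (n:ℝ) * x₀ := by nlinarith [hx₀.1]
      have h2 := Int.ceil_lt_add_one ((n:ℝ) * a)
      have h3 := Int.le_ceil ((n:ℝ) * a)
      have h4 : ((⌊(n : ℝ) * x₀⌋ : ℝ) + 1) ≤ (⌈(n : ℝ) * a⌉ : ℝ) := by
        have : ⌊(n : ℝ) * x₀⌋ + 1 ≤ ⌈(n : ℝ) * a⌉ := by omega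
        exact_mod_cast this
      have h5 := Int.lt_floor_add_one ((n:ℝ) * x₀)
      rw [abs_le]
      constructor <;> linarith
  obtain ⟨k₀, hk₀F, hk₀d⟩ := hk₀
  have hVlb : 1 / (2 * C) ≤ V := by
    have h1 : 1 / (2 * C) ≤ Φk k₀ := Phi_ge hk₀d
    have h2 : Φk k₀ ≤ V := Finset.single_le_sum (fun k _ => hΦnonneg k) hk₀F
    linarith
  have hVpos : 0 < V := lt_of_lt_of_le (by positivity) hVlb
  have hVinv : V⁻¹ ≤ 2 * C := by
    have := inv_anti₀ (by positivity : (0:ℝ) < 1/(2*C)) hVlb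
    rwa [one_div, inv_inv] at this
  have hkn : ∀ k ∈ F, ((k:ℝ)/n) ∈ s := by
    intro k hk
    rw [hFdef, Finset.mem_Icc] at hk
    have h1 : (n:ℝ)*a ≤ k := le_trans (Int.le_ceil _) (by exact_mod_cast hk.1)
    have h2 : (k:ℝ) ≤ (n:ℝ)*b := le_trans (by exact_mod_cast hk.2) (Int.floor_le _)
    rw [hsdef, Set.mem_Icc]
    constructor
    · rw [le_div_iff₀ hn0]; linarith
    · rw [div_le_iff₀ hn0]; linarith
  rcases eq_or_lt_of_le hab with heq | hab'
  · -- degenerate case a = b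
    have hba : b - a = 0 := by rw [← heq]; ring
    have hx0a : x₀ = a := le_antisymm (heq ▸ hx₀.2) hx₀.1
    have hkk : ∀ k ∈ F, ((k:ℝ)/n) = x₀ := by
      intro k hk
      rw [hFdef, Finset.mem_Icc] at hk
      have h1 : (n:ℝ)*a ≤ k := le_trans (Int.le_ceil _) (by exact_mod_cast hk.1)
      have h2 : (k:ℝ) ≤ (n:ℝ)*b := le_trans (by exact_mod_cast hk.2) (Int.floor_le _)
      have : (k:ℝ) = (n:ℝ)*x₀ := by rw [hx0a]; rw [← heq] at h2; linarith
      rw [this, mul_comm, mul_div_assoc, div_self hn0.ne', mul_one]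
    have hAneq : An m a b n f x₀ = f x₀ := by
      have e0 : An m a b n f x₀ = V⁻¹ • ∑ k ∈ F, Φk k • f ((k:ℝ)/n) := rfl
      have e1 : ∑ k ∈ F, Φk k • f ((k:ℝ)/n) = V • f x₀ := by
        rw [hVdef, Finset.sum_smul]
        apply Finset.sum_congr rfl
        intro k hk
        rw [hkk k hk]
      rw [e0, e1, smul_smul, inv_mul_cancel₀ hVpos.ne', one_smul]
    rw [hAneq, sub_self, norm_zero]
    apply mul_nonneg hCpos.le
    apply add_nonneg
    · apply div_nonneg (by linarith) (by positivity)
    · apply div_nonneg _ (by positivity)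
      apply mul_nonneg hMf0
      rw [hba]
      exact pow_nonneg le_rfl N
  · -- main case a < b
    set lam := (n:ℝ)^(1-α) with hlamdef
    have hgbdd : BddAbove (Set.range fun t : s => ‖g t‖) := by
      obtain ⟨B0, hB0⟩ := (isCompact_Icc (a := a) (b := b)).exists_bound_of_continuousOn
        (hf.continuousOn_iteratedDerivWithin (le_refl _) (uniqueDiffOn_Icc hab'))
      exact ⟨B0, by rintro r ⟨t, rfl⟩; exact hB0 t t.2⟩
    have hMf_ge : ∀ ξ ∈ s, ‖g ξ‖ ≤ Mf := fun ξ hξ => le_ciSup hgbdd ⟨ξ, hξ⟩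
    have hgx₀ : g x₀ = 0 := hder N hN le_rfl
    have hω_ge : ∀ ξ ∈ s, |ξ - x₀| ≤ 1/(n:ℝ)^α → ‖g ξ‖ ≤ ω := by
      intro ξ hξ hd
      have hbddset : BddAbove {r : ℝ | ∃ u ∈ s, ∃ v ∈ s, |u - v| ≤ 1/(n:ℝ)^α ∧ r = ‖g u - g v‖} := by
        obtain ⟨B0, hB0⟩ := hgbdd
        simp only [upperBounds, Set.mem_range, Subtype.exists] at hB0
        refine ⟨2*B0, ?_⟩
        rintro r ⟨u, hu, v, hv, _, rfl⟩
        have h1 : ‖g u‖ ≤ B0 := hB0 ⟨u, hu, rfl⟩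
        have h2 : ‖g v‖ ≤ B0 := hB0 ⟨v, hv, rfl⟩
        calc ‖g u - g v‖ ≤ ‖g u‖ + ‖g v‖ := norm_sub_le _ _
          _ ≤ 2*B0 := by linarith
      have : ‖g ξ - g x₀‖ ≤ ω := le_csSup hbddset ⟨ξ, hξ, x₀, hx₀, hd, rfl⟩
      rwa [hgx₀, sub_zero] at this
    -- decomposition of the operator difference
    have hdiff : An m a b n f x₀ - f x₀ = V⁻¹ • ∑ k ∈ F, Φk k • (f ((k:ℝ)/n) - f x₀) := by
      have e0 : An m a b n f x₀ = V⁻¹ • ∑ k ∈ F, Φk k • f ((k:ℝ)/n) := rfl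
      have e1 : ∑ k ∈ F, Φk k • (f ((k:ℝ)/n) - f x₀)
          = (∑ k ∈ F, Φk k • f ((k:ℝ)/n)) - V • f x₀ := by
        rw [hVdef, Finset.sum_smul, ← Finset.sum_sub_distrib]
        apply Finset.sum_congr rfl
        intro k _
        rw [smul_sub]
      rw [e0, e1, smul_sub, smul_smul, inv_mul_cancel₀ hVpos.ne', one_smul]
    -- set up pointwise bounds
    set q0 : ℝ := ω * ((n:ℝ)^(α * (N:ℝ)))⁻¹ / N.factorial with hq0def
    set q1 : ℝ := Mf * (b-a)^N / N.factorial with hq1def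
    have hq0nn : 0 ≤ q0 := by
      rw [hq0def]
      positivity
    have hq1nn : 0 ≤ q1 := by
      rw [hq1def]
      have : (0:ℝ) ≤ (b-a)^N := pow_nonneg (by linarith) N
      positivity
    have hpowid : (1/(n:ℝ)^α)^N = ((n:ℝ)^(α * (N:ℝ)))⁻¹ := by
      rw [Real.rpow_mul hn0.le, Real.rpow_natCast, one_div, ← inv_pow]
    set P : ℤ → Prop := fun k => |(k:ℝ)/n - x₀| ≤ 1/(n:ℝ)^α with hPdef
    have hnear : ∀ k ∈ F, P k → Φk k * ‖f ((k:ℝ)/n) - f x₀‖ ≤ Φk k * q0 := by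
      intro k hkF hPk
      apply mul_le_mul_of_nonneg_left _ (hΦnonneg k)
      have htay := taylor_vanishing hab' hN hf hx₀ hder (hkn k hkF)
        (fun ξ hξ hd => hω_ge ξ hξ (le_trans hd hPk))
      refine htay.trans ?_
      rw [hq0def, div_le_div_iff₀ hNfacpos hNfacpos]
      apply mul_le_mul_of_nonneg_right _ hNfacpos.le
      apply mul_le_mul_of_nonneg_left _ hω0
      rw [← hpowid]
      exact pow_le_pow_left₀ (abs_nonneg _) hPk N
    have hfar : ∀ k ∈ F, ‖f ((k:ℝ)/n) - f x₀‖ ≤ q1 := by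
      intro k hkF
      have htay := taylor_vanishing hab' hN hf hx₀ hder (hkn k hkF)
        (fun ξ hξ _ => hMf_ge ξ hξ)
      refine htay.trans ?_
      rw [hq1def, div_le_div_iff₀ hNfacpos hNfacpos]
      apply mul_le_mul_of_nonneg_right _ hNfacpos.le
      apply mul_le_mul_of_nonneg_left _ hMf0
      apply pow_le_pow_left₀ (abs_nonneg _)
      have h1 := hkn k hkF
      rw [hsdef, Set.mem_Icc] at h1
      rw [abs_le]
      constructor
      · linarith [h1.1, hx₀.2]
      · linarith [h1.2, hx₀.1]
    set T : ℝ := ((lam-2)^(2*m))⁻¹/(2*(m:ℝ)) with hTdef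
    have hTnn : 0 ≤ T := by
      rw [hTdef]
      have := pow_pos hlam2 (2*m)
      positivity
    have hsplit := Finset.sum_filter_add_sum_filter_not F P
      (fun k => Φk k * ‖f ((k:ℝ)/n) - f x₀‖)
    set S := ∑ k ∈ F, Φk k * ‖f ((k:ℝ)/n) - f x₀‖ with hSdef
    have hnearS : ∑ k ∈ F.filter P, Φk k * ‖f ((k:ℝ)/n) - f x₀‖ ≤ q0 * V := by
      calc ∑ k ∈ F.filter P, Φk k * ‖f ((k:ℝ)/n) - f x₀‖
          ≤ ∑ k ∈ F.filter P, Φk k * q0 :=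
            Finset.sum_le_sum (fun k hk => by
              rw [Finset.mem_filter] at hk
              exact hnear k hk.1 hk.2)
        _ = q0 * ∑ k ∈ F.filter P, Φk k := by
            rw [Finset.mul_sum]
            apply Finset.sum_congr rfl
            intro k _
            ring
        _ ≤ q0 * V := by
            apply mul_le_mul_of_nonneg_left _ hq0nn
            exact Finset.sum_le_sum_of_subset_of_nonneg (Finset.filter_subset _ _)
              (fun k _ _ => hΦnonneg k)
    have hfarsub : F.filter (fun k => ¬ P k)
        ⊆ F.filter (fun k : ℤ => lam < |(n:ℝ)*x₀ - (k:ℝ)|) := by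
      intro k hk
      rw [Finset.mem_filter] at hk ⊢
      refine ⟨hk.1, ?_⟩
      have hnp : 1/(n:ℝ)^α < |(k:ℝ)/n - x₀| := not_le.1 hk.2
      have e1 : |(n:ℝ)*x₀ - k| = n * |(k:ℝ)/n - x₀| := by
        nth_rewrite 2 [← abs_of_pos hn0]
        rw [← abs_mul, abs_sub_comm]
        congr 1
        field_simp
      have e2 : lam = n * (1/(n:ℝ)^α) := by
        rw [hlamdef, show (1:ℝ) - α = 1 + (-α) by ring, Real.rpow_add hn0, Real.rpow_one,
          Real.rpow_neg hn0.le, one_div]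
      rw [e1, e2]
      exact (mul_lt_mul_iff_right₀ hn0).2 hnp
    have hfarS : ∑ k ∈ F.filter (fun k => ¬ P k), Φk k * ‖f ((k:ℝ)/n) - f x₀‖
        ≤ q1 * T := by
      calc ∑ k ∈ F.filter (fun k => ¬ P k), Φk k * ‖f ((k:ℝ)/n) - f x₀‖
          ≤ ∑ k ∈ F.filter (fun k => ¬ P k), Φk k * q1 :=
            Finset.sum_le_sum (fun k hk =>
              mul_le_mul_of_nonneg_left (hfar k (Finset.mem_filter.1 hk).1) (hΦnonneg k))
        _ = q1 * ∑ k ∈ F.filter (fun k => ¬ P k), Φk k := by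
            rw [Finset.mul_sum]
            apply Finset.sum_congr rfl
            intro k _
            ring
        _ ≤ q1 * T := by
            apply mul_le_mul_of_nonneg_left _ hq1nn
            calc ∑ k ∈ F.filter (fun k => ¬ P k), Φk k
                ≤ ∑ k ∈ F.filter (fun k : ℤ => lam < |(n:ℝ)*x₀ - (k:ℝ)|), Φk k :=
                  Finset.sum_le_sum_of_subset_of_nonneg hfarsub (fun k _ _ => hΦnonneg k)
              _ ≤ T := by
                  rw [hTdef]
                  exact tail_sum hm hn F
    rw [hdiff, norm_smul, Real.norm_eq_abs, abs_of_pos (inv_pos.2 hVpos)]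
    have hns : ‖∑ k ∈ F, Φk k • (f ((k:ℝ)/n) - f x₀)‖ ≤ S := by
      refine (norm_sum_le _ _).trans ?_
      apply Finset.sum_le_sum
      intro k _
      rw [norm_smul, Real.norm_eq_abs, abs_of_nonneg (hΦnonneg k)]
    have hS : S ≤ q0 * V + q1 * T := by
      rw [← hsplit]
      exact add_le_add hnearS hfarS
    have hchain : V⁻¹ * ‖∑ k ∈ F, Φk k • (f ((k:ℝ)/n) - f x₀)‖ ≤ V⁻¹ * (q0 * V + q1 * T) :=
      mul_le_mul_of_nonneg_left (le_trans hns hS) (inv_pos.2 hVpos).le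
    refine hchain.trans ?_
    have hexp : V⁻¹ * (q0 * V + q1 * T) = q0 + V⁻¹ * (q1 * T) := by
      field_simp
    rw [hexp]
    have hstep2 : V⁻¹ * (q1 * T) ≤ (2*C) * (q1 * T) :=
      mul_le_mul_of_nonneg_right hVinv (mul_nonneg hq1nn hTnn)
    have e1 : C * (ω * 2 / ((n:ℝ)^(α * (N:ℝ)) * (N.factorial : ℝ))) = 2*C*q0 := by
      rw [hq0def]
      ring
    have e2 : C * (Mf * (b-a)^N / ((N.factorial : ℝ) * m * (lam-2)^(2*m))) = 2*C*(q1*T) := by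
      rw [hq1def, hTdef]
      ring
    have hq0le : q0 ≤ 2*C*q0 := by
      have h := mul_le_mul_of_nonneg_right (by linarith : (1:ℝ) ≤ 2*C) hq0nn
      rwa [one_mul] at h
    calc q0 + V⁻¹ * (q1 * T) ≤ 2*C*q0 + 2*C*(q1*T) := add_le_add hq0le hstep2
      _ = C * (ω * 2 / ((n:ℝ)^(α * (N:ℝ)) * (N.factorial : ℝ)))
          + C * (Mf * (b-a)^N / ((N.factorial : ℝ) * m * (lam-2)^(2*m))) := by
            rw [e1, e2]
      _ = C * (ω * 2 / ((n:ℝ)^(α * (N:ℝ)) * (N.factorial : ℝ))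
          + Mf * (b-a)^N / ((N.factorial : ℝ) * m * (lam-2)^(2*m))) := by
            rw [mul_add]
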